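/- For any abelian lattice-ordered group G, the lattice Id_c G of principal ℓ-ideals of G is completely normal: for all A, B ∈ Id_c G there exist U, V ∈ Id_c G such that A ∨ B = A ∨ V = U ∨ B and U ∧ V = ⟨0⟩. (Concretely, for a, b ∈ G⁺ one may take U = ⟨(a − b)⁺⟩ and V = ⟨(b − a)⁺⟩.) -/
import Mathlib


/-- The principal ℓ-ideal generated by `x`: all `y` with `|y| ≤ n • |x|` for some `n : ℕ`. -/
def pIdeal {G : Type*} [Lattice G] [AddCommGroup G] (x : G) : Set G :=
  {y | ∃ n : ℕ, |y| ≤ n • |x|}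

section Aux
variable {G : Type*} [Lattice G] [AddCommGroup G]
  [CovariantClass G G (· + ·) (· ≤ ·)]

lemma pIdeal_eq_of_le {x y : G} (hx : 0 ≤ x) (hy : 0 ≤ y) {n m : ℕ}
    (hxy : x ≤ n • y) (hyx : y ≤ m • x) : pIdeal x = pIdeal y := by
  ext z
  simp only [pIdeal, Set.mem_setOf_eq]
  constructor
  · rintro ⟨k, hk⟩
    refine ⟨k * n, ?_⟩
    rw [abs_of_nonneg hx] at hk
    rw [abs_of_nonneg hy]
    calc |z| ≤ k • x := hk
      _ ≤ k • (n • y) := nsmul_le_nsmul_right hxy k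
      _ = (k * n) • y := by rw [mul_comm, mul_nsmul]
  · rintro ⟨k, hk⟩
    refine ⟨k * m, ?_⟩
    rw [abs_of_nonneg hy] at hk
    rw [abs_of_nonneg hx]
    calc |z| ≤ k • y := hk
      _ ≤ k • (m • x) := nsmul_le_nsmul_right hyx k
      _ = (k * m) • x := by rw [mul_comm, mul_nsmul]

lemma add_inf_le_of_nonneg {a b c : G} (ha : 0 ≤ a) (hb : 0 ≤ b) (hc : 0 ≤ c) :
    (a + b) ⊓ c ≤ a ⊓ c + b ⊓ c := by
  have : a ⊓ c + b ⊓ c = ((a + b) ⊓ (a + c)) ⊓ ((c + b) ⊓ (c + c)) := by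
    rw [add_inf, inf_add, inf_add, inf_inf_inf_comm]
  rw [this]
  refine le_inf (le_inf inf_le_left ?_) (le_inf ?_ ?_)
  · exact inf_le_right.trans (le_add_of_nonneg_left ha)
  · exact inf_le_right.trans (le_add_of_nonneg_right hb)
  · exact inf_le_right.trans (le_add_of_nonneg_left hc)

lemma nsmul_inf_eq_zero {u v : G} (hu : 0 ≤ u) (hv : 0 ≤ v) (h : u ⊓ v = 0)
    (n : ℕ) : (n • u) ⊓ v = 0 := by
  induction n with
  | zero => simpa using hv
  | succ k ih =>
      refine le_antisymm ?_ (le_inf (nsmul_nonneg hu _) hv)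
      calc (k + 1) • u ⊓ v = (k • u + u) ⊓ v := by rw [succ_nsmul]
        _ ≤ (k • u) ⊓ v + u ⊓ v :=
            add_inf_le_of_nonneg (nsmul_nonneg hu k) hu hv
        _ = 0 := by rw [ih, h, add_zero]

end Aux

/-- `Id_c G` is completely normal: every pair of principal ℓ-ideals has a splitting pair
(joins of principal ℓ-ideals being given by `⟨a⟩ ∨ ⟨b⟩ = ⟨a ⊔ b⟩`). -/
theorem Idc_completely_normal {G : Type*} [Lattice G] [AddCommGroup G]
    [CovariantClass G G (· + ·) (· ≤ ·)] (a b : G) (ha : 0 ≤ a) (hb : 0 ≤ b) :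
    ∃ u v : G, 0 ≤ u ∧ 0 ≤ v ∧
      pIdeal (a ⊔ b) = pIdeal (a ⊔ v) ∧
      pIdeal (a ⊔ b) = pIdeal (u ⊔ b) ∧
      pIdeal u ∩ pIdeal v = pIdeal (0 : G) := by
  refine ⟨(a - b) ⊔ 0, (b - a) ⊔ 0, le_sup_right, le_sup_right, ?_, ?_, ?_⟩
  · -- pIdeal (a ⊔ b) = pIdeal (a ⊔ v)
    have hv : (b - a) ⊔ 0 ≤ b := sup_le (sub_le_self b ha) hb
    have h1 : a ⊔ ((b - a) ⊔ 0) ≤ 1 • (a ⊔ b) := by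
      rw [one_nsmul]; exact sup_le le_sup_left (hv.trans le_sup_right)
    have h2 : a ⊔ b ≤ 2 • (a ⊔ ((b - a) ⊔ 0)) := by
      have : a + ((b - a) ⊔ 0) = b ⊔ a := by rw [add_sup, add_sub_cancel, add_zero]
      rw [two_nsmul]
      calc a ⊔ b = b ⊔ a := sup_comm a b
        _ = a + ((b - a) ⊔ 0) := this.symm
        _ ≤ (a ⊔ ((b - a) ⊔ 0)) + (a ⊔ ((b - a) ⊔ 0)) :=
            add_le_add le_sup_left le_sup_right
    exact pIdeal_eq_of_le (le_trans ha le_sup_left)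
      (le_trans ha le_sup_left) h2 h1
  · -- pIdeal (a ⊔ b) = pIdeal (u ⊔ b)
    have hu : (a - b) ⊔ 0 ≤ a := sup_le (sub_le_self a hb) ha
    have h1 : ((a - b) ⊔ 0) ⊔ b ≤ 1 • (a ⊔ b) := by
      rw [one_nsmul]; exact sup_le (hu.trans le_sup_left) le_sup_right
    have h2 : a ⊔ b ≤ 2 • (((a - b) ⊔ 0) ⊔ b) := by
      have : b + ((a - b) ⊔ 0) = a ⊔ b := by rw [add_sup, add_sub_cancel, add_zero]
      rw [two_nsmul]
      calc a ⊔ b = b + ((a - b) ⊔ 0) := this.symm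
        _ ≤ (((a - b) ⊔ 0) ⊔ b) + (((a - b) ⊔ 0) ⊔ b) :=
            add_le_add le_sup_right le_sup_left
    exact pIdeal_eq_of_le (le_trans ha le_sup_left)
      (le_trans hb le_sup_right) h2 h1
  · -- pIdeal u ∩ pIdeal v = pIdeal 0
    have hu : (0:G) ≤ (a - b) ⊔ 0 := le_sup_right
    have hv : (0:G) ≤ (b - a) ⊔ 0 := le_sup_right
    have hd : ((a - b) ⊔ 0) ⊓ ((b - a) ⊔ 0) = 0 := by
      have := posPart_inf_negPart_eq_zero (a - b)
      rwa [posPart_def, negPart_def, neg_sub] at this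
    ext z
    simp only [pIdeal, Set.mem_inter_iff, Set.mem_setOf_eq, smul_zero, abs_zero]
    constructor
    · rintro ⟨⟨n, hn⟩, ⟨m, hm⟩⟩
      refine ⟨0, ?_⟩
      have h1 : (n • ((a - b) ⊔ 0)) ⊓ ((b - a) ⊔ 0) = 0 := nsmul_inf_eq_zero hu hv hd n
      have h2 : (m • ((b - a) ⊔ 0)) ⊓ (n • ((a - b) ⊔ 0)) = 0 := by
        rw [inf_comm] at h1
        exact nsmul_inf_eq_zero hv (nsmul_nonneg hu n) h1 m
      rw [abs_of_nonneg hu] at hn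
      rw [abs_of_nonneg hv] at hm
      calc |z| ≤ (n • ((a - b) ⊔ 0)) ⊓ (m • ((b - a) ⊔ 0)) := le_inf hn hm
        _ = 0 := by rw [inf_comm, h2]
    · rintro ⟨n, hn⟩
      have : |z| ≤ 0 := by simpa using hn
      exact ⟨⟨0, by simpa using this⟩, ⟨0, by simpa using this⟩⟩
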